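/- For n ≥ 2 and 0 ≤ s < r ≤ m, the numbers c_{n,m,r,s} and d_{n,m,r,s} satisfy c_{n,m,r,s} = c_{n−1,m,r,s} + d_{n,m,r,s} + Σ_{i=0}^{s−1} c_{n−1,m−1,r,i}; moreover, for n ≥ 2 and 0 ≤ r ≤ m, d_{n,m,r,r} = c_{n−1,m,r,r}. -/

import Mathlib

/-- Number of ascents of a sequence of non-negative integers:
indices `j` with `x j < x (j+1)`. -/
def ascents (l : List ℕ) : ℕ :=
  ((l.zip l.tail).filter (fun p => p.1 < p.2)).length

/-- `x` is an ascent sequence: it starts with 0 and each subsequent letter is at most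
one more than the number of ascents of the preceding prefix. -/
def IsAscentSeq (x : List ℕ) : Prop :=
  (∀ h : 0 < x.length, x.get ⟨0, h⟩ = 0) ∧
  ∀ i : Fin x.length, 0 < (i : ℕ) → x.get i ≤ ascents (x.take (i : ℕ)) + 1

/-- `p` contains the pattern `t`: `p` has a subsequence order-isomorphic to `t`. -/
def Contains (p t : List ℕ) : Prop :=
  ∃ f : Fin t.length → Fin p.length, StrictMono f ∧
    ∀ i j : Fin t.length, t.get i < t.get j ↔ p.get (f i) < p.get (f j)

/-- `p` avoids the pattern `t`. -/
def Avoids (p t : List ℕ) : Prop := ¬ Contains p t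

/-- `cA n m r s` is the number of 210-avoiding ascent sequences of length `n` with
exactly `m` ascents, largest letter `r`, and last letter `s`. -/
noncomputable def cA (n m r s : ℕ) : ℕ :=
  {x : List ℕ | x.length = n ∧ IsAscentSeq x ∧ Avoids x [2, 1, 0] ∧
    ascents x = m ∧ x.foldr max 0 = r ∧ x.getLast? = some s}.ncard

/-- `dA n m r s` is the number of 210-avoiding ascent sequences of length `n` with
exactly `m` ascents, largest letter `r`, last letter `s`, and next-to-last
letter equal to `r`. -/
noncomputable def dA (n m r s : ℕ) : ℕ :=
  {x : List ℕ | x.length = n ∧ IsAscentSeq x ∧ Avoids x [2, 1, 0] ∧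
    ascents x = m ∧ x.foldr max 0 = r ∧ x.getLast? = some s ∧
    x.dropLast.getLast? = some r}.ncard

/-! ### Auxiliary lemmas -/

section Aux

lemma ascents_cons_cons (a b : ℕ) (l : List ℕ) :
    ascents (a :: b :: l) = (if a < b then 1 else 0) + ascents (b :: l) := by
  simp only [ascents, List.tail_cons, List.zip_cons_cons, List.filter_cons]
  by_cases h : a < b <;> simp [h] <;> omega

lemma ascents_cons (a : ℕ) (l : List ℕ) :
    ascents (a :: l) = ascents l + (l.head?.elim 0 fun b => if a < b then 1 else 0) := by
  cases l with
  | nil => simp [ascents]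
  | cons b l => rw [ascents_cons_cons]; simp [Nat.add_comm]

lemma ascents_concat (y : List ℕ) (s : ℕ) :
    ascents (y ++ [s]) = ascents y + (y.getLast?.elim 0 fun t => if t < s then 1 else 0) := by
  induction y with
  | nil => simp [ascents]
  | cons a y ih =>
    rw [List.cons_append, ascents_cons, ih, ascents_cons]
    cases y with
    | nil => simp [ascents]
    | cons b y =>
      simp only [List.getLast?_cons_cons, List.head?_cons, List.cons_append, Option.elim]
      ring

lemma ascents_concat' {y : List ℕ} {t : ℕ} (ht : y.getLast? = some t) (s : ℕ) :
    ascents (y ++ [s]) = ascents y + if t < s then 1 else 0 := by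
  rw [ascents_concat, ht]; rfl

lemma isAscentSeq_concat {y : List ℕ} (hy : y ≠ []) (s : ℕ) :
    IsAscentSeq (y ++ [s]) ↔ IsAscentSeq y ∧ s ≤ ascents y + 1 := by
  have hpos : 0 < y.length := List.length_pos_iff.mpr hy
  constructor
  · rintro ⟨h0, h1⟩
    refine ⟨⟨?_, ?_⟩, ?_⟩
    · intro h
      have := h0 (by simp)
      rw [List.get_eq_getElem, List.getElem_append_left hpos] at this
      exact this
    · intro i hi
      have := h1 ⟨(i : ℕ), by simp⟩ hi
      rw [List.get_eq_getElem] at this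
      simp only at this
      rw [List.getElem_append_left i.isLt,
        List.take_append_of_le_length (le_of_lt i.isLt)] at this
      rw [List.get_eq_getElem]
      exact this
    · have := h1 ⟨y.length, by simp⟩ hpos
      rw [List.get_eq_getElem] at this
      simp only at this
      rwa [List.getElem_concat_length rfl, List.take_left] at this
  · rintro ⟨⟨h0, h1⟩, hs⟩
    refine ⟨?_, ?_⟩
    · intro h
      have := h0 hpos
      rw [List.get_eq_getElem] at this ⊢
      simp only
      rw [List.getElem_append_left hpos]
      exact this
    · intro i hi
      rw [List.get_eq_getElem]
      rcases Nat.lt_or_ge (i : ℕ) y.length with hlt | hge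
      · have := h1 ⟨(i : ℕ), hlt⟩ hi
        rw [List.get_eq_getElem] at this
        simp only at this
        rw [List.getElem_append_left hlt,
          List.take_append_of_le_length (le_of_lt hlt)]
        exact this
      · have hieq : (i : ℕ) = y.length := by
          have := i.isLt; simp at this; omega
        rw [List.getElem_concat_length hieq, hieq, List.take_left]
        exact hs

/-- `Has210 p` iff `p` has a strictly decreasing subsequence of length 3. -/
def Has210 (p : List ℕ) : Prop := ∃ a b c : ℕ, c < b ∧ b < a ∧ [a, b, c].Sublist p

lemma contains210_iff (p : List ℕ) : Contains p [2, 1, 0] ↔ Has210 p := by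
  constructor
  · rintro ⟨f, hmono, hiff⟩
    refine ⟨p.get (f ⟨0, by simp⟩), p.get (f ⟨1, by simp⟩), p.get (f ⟨2, by simp⟩),
      ?_, ?_, ?_⟩
    · exact (hiff ⟨2, by simp⟩ ⟨1, by simp⟩).mp (by simp)
    · exact (hiff ⟨1, by simp⟩ ⟨0, by simp⟩).mp (by simp)
    · rw [List.sublist_iff_exists_fin_orderEmbedding_get_eq]
      refine ⟨OrderEmbedding.ofStrictMono
        (fun i => f ⟨(i : ℕ), by simpa using i.isLt⟩)
        (fun i j hij => hmono (by simpa using hij)), ?_⟩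
      intro ix
      fin_cases ix <;> rfl
  · rintro ⟨a, b, c, hcb, hba, hsub⟩
    rw [List.sublist_iff_exists_fin_orderEmbedding_get_eq] at hsub
    obtain ⟨f, hf⟩ := hsub
    refine ⟨fun i => f ⟨(i : ℕ), by simpa using i.isLt⟩,
      fun i j hij => f.strictMono (by simpa using hij), ?_⟩
    have h0 : p.get (f ⟨0, by simp⟩) = a := (hf ⟨0, by simp⟩).symm
    have h1 : p.get (f ⟨1, by simp⟩) = b := (hf ⟨1, by simp⟩).symm
    have h2 : p.get (f ⟨2, by simp⟩) = c := (hf ⟨2, by simp⟩).symm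
    intro i j
    fin_cases i <;> fin_cases j <;> simp_all <;> omega

lemma avoids_iff (p : List ℕ) : Avoids p [2, 1, 0] ↔ ¬ Has210 p :=
  not_congr (contains210_iff p)

lemma sublist_concat_iff' {l y : List ℕ} {s : ℕ} :
    l.Sublist (y ++ [s]) ↔ l.Sublist y ∨ ∃ l', l = l' ++ [s] ∧ l'.Sublist y := by
  constructor
  · intro h
    rw [List.sublist_append_iff] at h
    obtain ⟨l₁, l₂, rfl, h1, h2⟩ := h
    rcases List.sublist_singleton.mp h2 with rfl | rfl
    · left; simpa using h1
    · right; exact ⟨l₁, rfl, h1⟩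
  · rintro (h | ⟨l', rfl, h⟩)
    · exact h.trans (List.sublist_append_left y [s])
    · exact h.append_right [s]

lemma has210_concat_iff {y : List ℕ} {s : ℕ} :
    Has210 (y ++ [s]) ↔ Has210 y ∨ ∃ a b : ℕ, s < b ∧ b < a ∧ [a, b].Sublist y := by
  constructor
  · rintro ⟨a, b, c, h1, h2, hsub⟩
    rcases sublist_concat_iff'.mp hsub with h | ⟨l', heq, hl⟩
    · exact Or.inl ⟨a, b, c, h1, h2, h⟩
    · have h' : [a, b] ++ [c] = l' ++ [s] := by simpa using heq
      obtain ⟨rfl, hc⟩ := List.append_inj' h' rfl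
      have hcs : c = s := by simpa using hc
      exact Or.inr ⟨a, b, hcs ▸ h1, h2, hl⟩
  · rintro (⟨a, b, c, h1, h2, h⟩ | ⟨a, b, h1, h2, h⟩)
    · exact ⟨a, b, c, h1, h2, h.trans (List.sublist_append_left y [s])⟩
    · exact ⟨a, b, s, h1, h2, by simpa using h.append_right [s]⟩

lemma has210_of_sublist {l p : List ℕ} (h : l.Sublist p) (hl : Has210 l) : Has210 p := by
  obtain ⟨a, b, c, h1, h2, h3⟩ := hl
  exact ⟨a, b, c, h1, h2, h3.trans h⟩

lemma no_pair_gt_last {y : List ℕ} {t : ℕ} (hy : y.getLast? = some t) (hav : ¬ Has210 y)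
    {a b : ℕ} (hb : t < b) (hba : b < a) (hsub : [a, b].Sublist y) : False := by
  obtain ⟨y', rfl⟩ := List.getLast?_eq_some_iff.mp hy
  rcases sublist_concat_iff'.mp hsub with h | ⟨l', heq, hl⟩
  · exact hav ⟨a, b, t, hb, hba, by simpa using h.append_right [t]⟩
  · have h' : [a] ++ [b] = l' ++ [t] := by simpa using heq
    obtain ⟨rfl, hbt⟩ := List.append_inj' h' rfl
    simp at hbt; omega

lemma avoids_concat_of {y : List ℕ} {t s : ℕ} (hy : y.getLast? = some t) (ht : t ≤ s)
    (hav : ¬ Has210 y) : ¬ Has210 (y ++ [s]) := by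
  rw [has210_concat_iff]
  rintro (h | ⟨a, b, h1, h2, h3⟩)
  · exact hav h
  · exact no_pair_gt_last hy hav (lt_of_le_of_lt ht h1) h2 h3

lemma foldr_max_init (l : List ℕ) (a : ℕ) : l.foldr max a = max (l.foldr max 0) a := by
  induction l with
  | nil => simp
  | cons b l ih => simp [ih]

lemma foldr_max_concat (y : List ℕ) (s : ℕ) :
    (y ++ [s]).foldr max 0 = max (y.foldr max 0) s := by
  rw [List.foldr_append]
  simpa using foldr_max_init y s

lemma le_foldr_max {a : ℕ} {l : List ℕ} (h : a ∈ l) : a ≤ l.foldr max 0 := by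
  induction l with
  | nil => simp at h
  | cons b l ih =>
    rcases List.mem_cons.mp h with rfl | h
    · simp
    · simp only [List.foldr_cons]; exact le_trans (ih h) (le_max_right _ _)

lemma foldr_max_mem {l : List ℕ} (h : l.foldr max 0 ≠ 0) : l.foldr max 0 ∈ l := by
  induction l with
  | nil => simp at h
  | cons b l ih =>
    simp only [List.foldr_cons] at h ⊢
    rcases Nat.le_total b (l.foldr max 0) with hle | hle
    · rw [Nat.max_eq_right hle] at h ⊢
      exact List.mem_cons_of_mem _ (ih h)
    · rw [Nat.max_eq_left hle]
      exact List.mem_cons_self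

lemma avoids_concat_max {y : List ℕ} {r : ℕ} (hmax : y.foldr max 0 = r)
    (hav : ¬ Has210 y) : ¬ Has210 (y ++ [r]) := by
  rw [has210_concat_iff]
  rintro (h | ⟨a, b, h1, h2, h3⟩)
  · exact hav h
  · have hby : b ∈ y := h3.subset (by simp)
    have := le_foldr_max hby
    omega

lemma finite_bdd (n r : ℕ) : {l : List ℕ | l.length = n ∧ ∀ a ∈ l, a ≤ r}.Finite := by
  induction n with
  | zero =>
    apply Set.Finite.subset (Set.finite_singleton ([] : List ℕ))
    rintro l ⟨h, -⟩
    simp [List.length_eq_zero_iff.mp h]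
  | succ n ih =>
    apply Set.Finite.subset (Set.Finite.image2 List.cons (Set.finite_Iic r) ih)
    rintro l ⟨hl, hb⟩
    cases l with
    | nil => simp at hl
    | cons a l =>
      exact Set.mem_image2_of_mem (by simpa using hb a List.mem_cons_self)
        ⟨by simpa using hl, fun x hx => hb x (List.mem_cons_of_mem a hx)⟩

/-! ### The counted sets -/

/-- The set counted by `cA`. -/
def CSet (n m r s : ℕ) : Set (List ℕ) :=
  {x : List ℕ | x.length = n ∧ IsAscentSeq x ∧ Avoids x [2, 1, 0] ∧
    ascents x = m ∧ x.foldr max 0 = r ∧ x.getLast? = some s}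

lemma cA_eq (n m r s : ℕ) : cA n m r s = (CSet n m r s).ncard := rfl

lemma dA_eq (n m r s : ℕ) :
    dA n m r s = {x ∈ CSet n m r s | x.dropLast.getLast? = some r}.ncard := by
  unfold dA CSet
  congr 1
  ext x
  simp only [Set.mem_setOf_eq, Set.mem_sep_iff]
  tauto

lemma finite_CSet (n m r s : ℕ) : (CSet n m r s).Finite := by
  apply (finite_bdd n r).subset
  rintro x ⟨h1, -, -, -, h5, -⟩
  exact ⟨h1, fun a ha => h5 ▸ le_foldr_max ha⟩

lemma setA_eq (n m r s : ℕ) (hsr : s < r) (hrm : r ≤ m) :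
    {x ∈ CSet (n + 1) m r s | x.dropLast.getLast? = some s} =
      (fun y => y ++ [s]) '' CSet n m r s := by
  ext x
  constructor
  · rintro ⟨⟨hlen, hasc, hav, hascents, hmax, hlast⟩, hnext⟩
    obtain ⟨y, rfl⟩ := List.getLast?_eq_some_iff.mp hlast
    rw [List.dropLast_concat] at hnext
    have hy : y ≠ [] := by rintro rfl; simp at hnext
    rw [avoids_iff] at hav
    rw [isAscentSeq_concat hy] at hasc
    refine ⟨y, ⟨by simpa using hlen, hasc.1, ?_, ?_, ?_, hnext⟩, rfl⟩
    · rw [avoids_iff]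
      exact fun h => hav (has210_of_sublist (List.sublist_append_left _ _) h)
    · rw [ascents_concat' hnext] at hascents
      simpa using hascents
    · rw [foldr_max_concat] at hmax
      omega
  · rintro ⟨y, ⟨hlen, hasc, hav, hascents, hmax, hlast⟩, rfl⟩
    have hy : y ≠ [] := by rintro rfl; simp at hlast
    rw [avoids_iff] at hav
    refine ⟨⟨by simpa using hlen, ?_, ?_, ?_, ?_, List.getLast?_concat⟩,
      by rw [List.dropLast_concat]; exact hlast⟩
    · rw [isAscentSeq_concat hy]
      exact ⟨hasc, by omega⟩
    · rw [avoids_iff]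
      exact avoids_concat_of hlast (le_refl s) hav
    · rw [ascents_concat' hlast]
      simp [hascents]
    · rw [foldr_max_concat, hmax]
      omega

lemma setB_eq (n m r s t : ℕ) (hts : t < s) (hsr : s < r) (hrm : r ≤ m) :
    {x ∈ CSet (n + 1) m r s | x.dropLast.getLast? = some t} =
      (fun y => y ++ [s]) '' CSet n (m - 1) r t := by
  have hm : 1 ≤ m := by omega
  ext x
  constructor
  · rintro ⟨⟨hlen, hasc, hav, hascents, hmax, hlast⟩, hnext⟩
    obtain ⟨y, rfl⟩ := List.getLast?_eq_some_iff.mp hlast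
    rw [List.dropLast_concat] at hnext
    have hy : y ≠ [] := by rintro rfl; simp at hnext
    rw [avoids_iff] at hav
    rw [isAscentSeq_concat hy] at hasc
    rw [ascents_concat' hnext] at hascents
    simp only [if_pos hts] at hascents
    refine ⟨y, ⟨by simpa using hlen, hasc.1, ?_, by omega, ?_, hnext⟩, rfl⟩
    · rw [avoids_iff]
      exact fun h => hav (has210_of_sublist (List.sublist_append_left _ _) h)
    · rw [foldr_max_concat] at hmax
      omega
  · rintro ⟨y, ⟨hlen, hasc, hav, hascents, hmax, hlast⟩, rfl⟩
    have hy : y ≠ [] := by rintro rfl; simp at hlast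
    rw [avoids_iff] at hav
    refine ⟨⟨by simpa using hlen, ?_, ?_, ?_, ?_, List.getLast?_concat⟩,
      by rw [List.dropLast_concat]; exact hlast⟩
    · rw [isAscentSeq_concat hy]
      exact ⟨hasc, by omega⟩
    · rw [avoids_iff]
      exact avoids_concat_of hlast (le_of_lt hts) hav
    · rw [ascents_concat' hlast, if_pos hts]
      omega
    · rw [foldr_max_concat, hmax]
      omega

lemma setD_eq (n m r : ℕ) (hrm : r ≤ m) :
    {x ∈ CSet (n + 1) m r r | x.dropLast.getLast? = some r} =
      (fun y => y ++ [r]) '' CSet n m r r := by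
  ext x
  constructor
  · rintro ⟨⟨hlen, hasc, hav, hascents, hmax, hlast⟩, hnext⟩
    obtain ⟨y, rfl⟩ := List.getLast?_eq_some_iff.mp hlast
    rw [List.dropLast_concat] at hnext
    have hy : y ≠ [] := by rintro rfl; simp at hnext
    rw [avoids_iff] at hav
    rw [isAscentSeq_concat hy] at hasc
    rw [ascents_concat' hnext] at hascents
    simp only [lt_irrefl, if_false] at hascents
    refine ⟨y, ⟨by simpa using hlen, hasc.1, ?_, by omega, ?_, hnext⟩, rfl⟩
    · rw [avoids_iff]
      exact fun h => hav (has210_of_sublist (List.sublist_append_left _ _) h)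
    · rw [foldr_max_concat] at hmax
      obtain ⟨y', rfl⟩ := List.getLast?_eq_some_iff.mp hnext
      have : r ≤ (y' ++ [r]).foldr max 0 := le_foldr_max (by simp)
      omega
  · rintro ⟨y, ⟨hlen, hasc, hav, hascents, hmax, hlast⟩, rfl⟩
    have hy : y ≠ [] := by rintro rfl; simp at hlast
    rw [avoids_iff] at hav
    refine ⟨⟨by simpa using hlen, ?_, ?_, ?_, ?_, List.getLast?_concat⟩,
      by rw [List.dropLast_concat]; exact hlast⟩
    · rw [isAscentSeq_concat hy]
      exact ⟨hasc, by omega⟩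
    · rw [avoids_iff]
      exact avoids_concat_max hmax hav
    · rw [ascents_concat' hlast]
      simp [hascents]
    · rw [foldr_max_concat, hmax]
      simp
  
lemma CSet_cover {n m r s : ℕ} (hn : 2 ≤ n) (hsr : s < r) {x : List ℕ}
    (hx : x ∈ CSet n m r s) :
    ∃ t, x.dropLast.getLast? = some t ∧ (t = s ∨ t < s ∨ t = r) := by
  obtain ⟨hlen, hasc, hav, hascents, hmax, hlast⟩ := hx
  obtain ⟨y, rfl⟩ := List.getLast?_eq_some_iff.mp hlast
  rw [List.dropLast_concat]
  have hy : y ≠ [] := by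
    rintro rfl; simp at hlen; omega
  obtain ⟨t, ht⟩ : ∃ t, y.getLast? = some t := by
    cases h : y.getLast? with
    | none => exact absurd (List.getLast?_eq_none_iff.mp h) hy
    | some t => exact ⟨t, rfl⟩
  refine ⟨t, ht, ?_⟩
  by_contra hcon
  push_neg at hcon
  obtain ⟨h1, h2, h3⟩ := hcon
  have hst : s < t := by omega
  obtain ⟨y', rfl⟩ := List.getLast?_eq_some_iff.mp ht
  have htr : t < r := by
    have : t ≤ ((y' ++ [t]) ++ [s]).foldr max 0 :=
      le_foldr_max (by simp)
    omega
  have hry' : r ∈ y' := by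
    have hrx : r ∈ (y' ++ [t]) ++ [s] := by
      rw [← hmax]
      exact foldr_max_mem (by omega)
    rcases List.mem_append.mp hrx with h | h
    · rcases List.mem_append.mp h with h | h
      · exact h
      · simp at h; omega
    · simp at h; omega
  rw [avoids_iff] at hav
  apply hav
  refine ⟨r, t, s, hst, htr, ?_⟩
  have hsub1 : [r].Sublist y' := List.singleton_sublist.mpr hry'
  have hsub2 : [r, t].Sublist (y' ++ [t]) := by simpa using hsub1.append_right [t]
  simpa using hsub2.append_right [s]

lemma ncard_biUnion_range {f : ℕ → Set (List ℕ)} (s : ℕ) (hf : ∀ t, (f t).Finite)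
    (hdisj : ∀ i j, i ≠ j → Disjoint (f i) (f j)) :
    (⋃ t ∈ Finset.range s, f t).ncard = ∑ t ∈ Finset.range s, (f t).ncard := by
  induction s with
  | zero => simp
  | succ s ih =>
    have hU : (⋃ t ∈ Finset.range s, f t).Finite := by
      apply Set.Finite.biUnion (Finset.finite_toSet _)
      exact fun i _ => hf i
    have hd : Disjoint (f s) (⋃ t ∈ Finset.range s, f t) := by
      rw [Set.disjoint_iff_inter_eq_empty]
      ext x
      simp only [Set.mem_inter_iff, Set.mem_iUnion, Set.mem_empty_iff_false, iff_false]
      rintro ⟨hx, t, htmem, hxt⟩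
      have : t ≠ s := by simp at htmem; omega
      exact (hdisj t s this).le_bot ⟨hxt, hx⟩
    rw [Finset.range_add_one, Finset.set_biUnion_insert,
      Finset.sum_insert Finset.notMem_range_self, ← ih,
      Set.ncard_union_eq hd (hf s) hU]

end Aux

/-- For `n ≥ 2`: `c_{n,m,r,s} = c_{n-1,m,r,s} + d_{n,m,r,s} + Σ_{i=0}^{s-1} c_{n-1,m-1,r,i}`
whenever `0 ≤ s < r ≤ m`, and `d_{n,m,r,r} = c_{n-1,m,r,r}` whenever `0 ≤ r ≤ m`. -/
theorem cA_dA_recurrences (n : ℕ) (hn : 2 ≤ n) :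
    (∀ m r s : ℕ, s < r → r ≤ m →
      cA n m r s
        = cA (n - 1) m r s + dA n m r s + ∑ i ∈ Finset.range s, cA (n - 1) (m - 1) r i)
    ∧ (∀ m r : ℕ, r ≤ m → dA n m r r = cA (n - 1) m r r) := by
  obtain ⟨k, rfl⟩ : ∃ k, n = (k + 1) + 1 := ⟨n - 2, by omega⟩
  have hinj : ∀ s : ℕ, Function.Injective (fun y : List ℕ => y ++ [s]) := by
    intro s a b hab
    simpa [List.append_left_inj] using hab
  constructor
  · intro m r s hsr hrm
    have hcover :
        CSet (k + 1 + 1) m r s =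
          ({x ∈ CSet (k + 1 + 1) m r s | x.dropLast.getLast? = some s} ∪
            {x ∈ CSet (k + 1 + 1) m r s | x.dropLast.getLast? = some r}) ∪
          ⋃ t ∈ Finset.range s, {x ∈ CSet (k + 1 + 1) m r s | x.dropLast.getLast? = some t} := by
      ext x
      constructor
      · intro hx
        obtain ⟨t, ht, hcase⟩ := CSet_cover (by omega) hsr hx
        rcases hcase with rfl | hlt | rfl
        · exact Or.inl (Or.inl ⟨hx, ht⟩)
        · exact Or.inr (Set.mem_biUnion (Finset.mem_range.mpr hlt) ⟨hx, ht⟩)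
        · exact Or.inl (Or.inr ⟨hx, ht⟩)
      · rintro ((⟨hx, -⟩ | ⟨hx, -⟩) | hx)
        · exact hx
        · exact hx
        · obtain ⟨t, -, hx, -⟩ := Set.mem_iUnion₂.mp hx
          exact hx
    have hfin : ∀ t : ℕ,
        ({x ∈ CSet (k + 1 + 1) m r s | x.dropLast.getLast? = some t} : Set (List ℕ)).Finite :=
      fun t => (finite_CSet _ _ _ _).subset (fun x hx => hx.1)
    have hdisj : ∀ i j : ℕ, i ≠ j →
        Disjoint {x ∈ CSet (k + 1 + 1) m r s | x.dropLast.getLast? = some i}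
          {x ∈ CSet (k + 1 + 1) m r s | x.dropLast.getLast? = some j} := by
      intro i j hij
      rw [Set.disjoint_left]
      rintro x ⟨-, hxi⟩ ⟨-, hxj⟩
      rw [hxi] at hxj
      exact hij (by simpa using hxj)
    have hUfin :
        (⋃ t ∈ Finset.range s,
          {x ∈ CSet (k + 1 + 1) m r s | x.dropLast.getLast? = some t}).Finite := by
      apply Set.Finite.biUnion (Finset.finite_toSet _)
      exact fun i _ => hfin i
    have hdisjU :
        Disjoint ({x ∈ CSet (k + 1 + 1) m r s | x.dropLast.getLast? = some s} ∪
            {x ∈ CSet (k + 1 + 1) m r s | x.dropLast.getLast? = some r})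
          (⋃ t ∈ Finset.range s,
            {x ∈ CSet (k + 1 + 1) m r s | x.dropLast.getLast? = some t}) := by
      rw [Set.disjoint_left]
      rintro x hx hxu
      obtain ⟨t, htmem, hxt⟩ := Set.mem_iUnion₂.mp hxu
      have htlt : t < s := by simpa using htmem
      rcases hx with ⟨-, hxs⟩ | ⟨-, hxr⟩
      · have h2 := hxt.2
        rw [hxs] at h2
        have : s = t := by simpa using h2
        omega
      · have h2 := hxt.2
        rw [hxr] at h2
        have : r = t := by simpa using h2
        omega
    rw [show k + 1 + 1 - 1 = k + 1 from rfl, cA_eq, cA_eq, dA_eq]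
    conv_lhs => rw [hcover]
    rw [Set.ncard_union_eq hdisjU ((hfin s).union (hfin r)) hUfin,
      Set.ncard_union_eq (hdisj s r (by omega)) (hfin s) (hfin r),
      ncard_biUnion_range s hfin hdisj]
    congr 1
    · congr 1
      rw [setA_eq (k + 1) m r s hsr hrm, Set.ncard_image_of_injective _ (hinj s)]
    · apply Finset.sum_congr rfl
      intro t htmem
      rw [cA_eq, setB_eq (k + 1) m r s t (Finset.mem_range.mp htmem) hsr hrm,
        Set.ncard_image_of_injective _ (hinj s)]
  · intro m r hrm
    rw [show k + 1 + 1 - 1 = k + 1 from rfl, dA_eq, cA_eq,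
      setD_eq (k + 1) m r hrm, Set.ncard_image_of_injective _ (hinj r)]
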